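/- arXiv:1803.10493 — 12 statements merged into one kernel-verified Lean document; each statement's English description precedes it below -/
import Mathlib

section
/- Let X be a topological space and (Y,d) a metric space. If a family E of continuous functions from X to Y is finitely equicontinuous at every point of X, then E is equicontinuous (in the usual sense: for every x in X and ε > 0 there is a neighbourhood U of x such that d(f(x), f(z)) < ε for all f in E and all z in U). -/
open Set Filter Topology Metric Bornology

/-- Finite equicontinuity of a family `E` at a point `x`. -/
def FinEquicontAt {X Y : Type*} [TopologicalSpace X] [MetricSpace Y]
    (E : Set (X → Y)) (x : X) : Prop :=
  ∀ ε > (0 : ℝ), ∃ 𝓑 : Finset (Set X), ⋃₀ (𝓑 : Set (Set X)) ∈ 𝓝 x ∧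
    ∀ f ∈ E, ∀ B ∈ 𝓑, ∀ p ∈ B, ∀ q ∈ B, dist (f p) (f q) < ε

/-- Finite equicontinuity of a family `E`. -/
def FinEquicont {X Y : Type*} [TopologicalSpace X] [MetricSpace Y]
    (E : Set (X → Y)) : Prop :=
  ∀ x : X, FinEquicontAt E x

/-- A function is locally bounded if every point has an open neighbourhood with bounded image. -/
def LocBounded {X Y : Type*} [TopologicalSpace X] [MetricSpace Y] (f : X → Y) : Prop :=
  ∀ x : X, ∃ U : Set X, IsOpen U ∧ x ∈ U ∧ IsBounded (f '' U)

theorem stmt0 {X Y : Type*} [TopologicalSpace X] [MetricSpace Y]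
    (E : Set (X → Y)) (hcont : ∀ f ∈ E, Continuous f)
    (hfe : FinEquicont E) :
    ∀ x : X, ∀ ε > (0 : ℝ), ∃ U ∈ 𝓝 x, ∀ f ∈ E, ∀ z ∈ U, dist (f x) (f z) < ε := by
  classical
  intro x ε hε
  obtain ⟨𝓑, hU, hB⟩ := hfe x (ε / 2) (by linarith)
  set 𝓑' := 𝓑.filter (fun B => x ∉ closure B) with h𝓑'
  refine ⟨interior (⋃₀ (𝓑 : Set (Set X))) ∩ ⋂ B ∈ 𝓑', (closure B)ᶜ, ?_, ?_⟩
  · apply Filter.inter_mem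
    · exact interior_mem_nhds.2 hU
    · refine (Filter.biInter_finset_mem _).2 fun B hB' => ?_
      exact isClosed_closure.isOpen_compl.mem_nhds (Finset.mem_filter.1 hB').2
  · rintro f hf z ⟨hz1, hz2⟩
    obtain ⟨B, hBmem, hzB⟩ := Set.mem_sUnion.1 (interior_subset hz1)
    have hBmem' : B ∈ 𝓑 := hBmem
    have hxB : x ∈ closure B := by
      by_contra h
      have hBf : B ∈ 𝓑' := Finset.mem_filter.2 ⟨hBmem', h⟩
      exact Set.mem_iInter₂.1 hz2 B hBf (subset_closure hzB)
    have hclosed : IsClosed {y | dist (f y) (f z) ≤ ε / 2} :=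
      isClosed_le ((hcont f hf).dist continuous_const) continuous_const
    have hsub : B ⊆ {y | dist (f y) (f z) ≤ ε / 2} :=
      fun p hp => le_of_lt (hB f hf B hBmem' p hp z hzB)
    have hle := hclosed.closure_subset_iff.2 hsub hxB
    simp only [Set.mem_setOf_eq] at hle
    linarith
end

section
/- Let X be a topological space and (Y,d) a metric space. If E ⊆ F(X,Y) is a finitely equicontinuous family of functions, then the closure of E in the topology of pointwise convergence on F(X,Y) is also finitely equicontinuous. -/
open Set Filter Topology Metric Bornology

theorem stmt1 {X Y : Type*} [TopologicalSpace X] [MetricSpace Y]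
    (E : Set (X → Y)) (hfe : FinEquicont E) :
    FinEquicont (closure E) := by
  intro x ε hε
  obtain ⟨𝓑, hN, hB⟩ := hfe x (ε / 2) (by linarith)
  refine ⟨𝓑, hN, ?_⟩
  intro g hg B hBm p hp q hq
  have hclosed : IsClosed {f : X → Y | dist (f p) (f q) ≤ ε / 2} := by
    have : Continuous fun f : X → Y => dist (f p) (f q) :=
      Continuous.dist (continuous_apply p) (continuous_apply q)
    exact isClosed_le this continuous_const
  have hsub : E ⊆ {f : X → Y | dist (f p) (f q) ≤ ε / 2} := fun f hf =>
    le_of_lt (hB f hf B hBm p hp q hq)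
  have := (closure_minimal hsub hclosed) hg
  simp only [mem_setOf_eq] at this
  linarith
end

section
/- Let X be a topological space and (Y,d) a metric space in which every bounded set is totally bounded. If E ⊆ F(X,Y) is finitely equicontinuous and f: X → Y is locally bounded, then E ∪ {f} is finitely equicontinuous. -/
open Set Filter Topology Metric Bornology

theorem stmt3 {X Y : Type*} [TopologicalSpace X] [MetricSpace Y]
    (htb : ∀ s : Set Y, IsBounded s → TotallyBounded s)
    (E : Set (X → Y)) (hfe : FinEquicont E)
    (f : X → Y) (hf : LocBounded f) :
    FinEquicont (E ∪ {f}) := by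
  classical
  intro x ε hε
  obtain ⟨𝓑, h𝓑nhds, h𝓑⟩ := hfe x ε hε
  obtain ⟨U, hUopen, hxU, hUbdd⟩ := hf x
  have htb' := htb _ hUbdd
  rw [totallyBounded_iff] at htb'
  obtain ⟨t, htfin, htcov⟩ := htb' (ε/4) (by linarith)
  refine ⟨(𝓑 ×ˢ htfin.toFinset).image
    (fun p => p.1 ∩ U ∩ f ⁻¹' (ball p.2 (ε/4))), ?_, ?_⟩
  · have hsub : (⋃₀ (𝓑 : Set (Set X))) ∩ U ⊆
        ⋃₀ (((𝓑 ×ˢ htfin.toFinset).image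
          (fun p => p.1 ∩ U ∩ f ⁻¹' (ball p.2 (ε/4))) : Finset (Set X)) : Set (Set X)) := by
      rintro z ⟨⟨B, hB, hzB⟩, hzU⟩
      have : f z ∈ ⋃ y ∈ t, ball y (ε/4) := htcov ⟨z, hzU, rfl⟩
      simp only [mem_iUnion] at this
      obtain ⟨c, hct, hfz⟩ := this
      refine ⟨B ∩ U ∩ f ⁻¹' (ball c (ε/4)), ?_, ⟨hzB, hzU⟩, hfz⟩
      simp only [Finset.coe_image, Set.mem_image, Finset.mem_coe, Finset.mem_product]
      exact ⟨(B, c), ⟨hB, htfin.mem_toFinset.2 hct⟩, rfl⟩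
    exact Filter.mem_of_superset
      (Filter.inter_mem h𝓑nhds (hUopen.mem_nhds hxU)) hsub
  · rintro g hg S hS p hp q hq
    simp only [Finset.mem_image, Finset.mem_product] at hS
    obtain ⟨⟨B, c⟩, ⟨hB, _⟩, rfl⟩ := hS
    rcases hg with hg | hg
    · exact h𝓑 g hg B hB p hp.1.1 q hq.1.1
    · rw [mem_singleton_iff] at hg
      subst hg
      have h1 : dist (g p) c < ε/4 := hp.2
      have h2 : dist (g q) c < ε/4 := hq.2
      calc dist (g p) (g q) ≤ dist (g p) c + dist (g q) c := dist_triangle_right _ _ _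
        _ < ε/4 + ε/4 := by linarith
        _ < ε := by linarith
end

section
/- Let X be a topological space and (Y,d) a metric space. If a net (f_σ) of functions from X to Y converges pointwise to f: X → Y and the set {f_σ} is finitely equicontinuous, then (f_σ) converges to f uniformly on every compact subset of X. -/
open Set Filter Topology Metric Bornology

theorem stmt4 {X Y ι : Type*} [TopologicalSpace X] [MetricSpace Y]
    (l : Filter ι) [l.NeBot] (F : ι → X → Y) (f : X → Y)
    (hp : ∀ x : X, Tendsto (fun σ => F σ x) l (𝓝 (f x)))
    (hfe : FinEquicont (Set.range F)) :
    ∀ K : Set X, IsCompact K → TendstoUniformlyOn F f l K := by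
  intro K hK
  rcases isEmpty_or_nonempty X with hX | hX
  · rw [Metric.tendstoUniformlyOn_iff]
    intro ε hε
    filter_upwards with σ x hx
    exact (hX.false x).elim
  rw [Metric.tendstoUniformlyOn_iff]
  intro ε hε
  have hε4 : (0 : ℝ) < ε / 4 := by linarith
  choose 𝓑 hnbd hosc using fun x => hfe x (ε / 4) hε4
  obtain ⟨t, hts, hcov⟩ :=
    hK.elim_nhds_subcover (fun x => ⋃₀ (↑(𝓑 x) : Set (Set X))) (fun x _ => hnbd x)
  have : Inhabited X := Classical.inhabited_of_nonempty hX
  classical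
  set pt : Set X → X := fun B => if h : B.Nonempty then h.some else default with hpt
  have key : ∀ᶠ σ in l, ∀ x ∈ t, ∀ B ∈ 𝓑 x, dist (F σ (pt B)) (f (pt B)) < ε / 4 := by
    rw [eventually_all_finset]
    intro x hx
    rw [eventually_all_finset]
    intro B hB
    have := hp (pt B) (Metric.ball_mem_nhds _ hε4)
    filter_upwards [this] with σ hσ
    simpa [dist_comm] using hσ
  filter_upwards [key] with σ hσ x hxK
  obtain ⟨i, hit, hxU⟩ := mem_iUnion₂.mp (hcov hxK)
  obtain ⟨B, hB, hxB⟩ := hxU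
  have hBne : B.Nonempty := ⟨x, hxB⟩
  have hptB : pt B ∈ B := by simp only [hpt, dif_pos hBne]; exact hBne.some_mem
  have h3 : dist (F σ (pt B)) (F σ x) < ε / 4 :=
    hosc i (F σ) (Set.mem_range_self σ) B hB (pt B) hptB x hxB
  have h2 : dist (F σ (pt B)) (f (pt B)) < ε / 4 := hσ i hit B hB
  have h1 : dist (f x) (f (pt B)) ≤ ε / 4 := by
    have hd : Tendsto (fun σ => dist (F σ x) (F σ (pt B))) l
        (𝓝 (dist (f x) (f (pt B)))) := (hp x).dist (hp (pt B))
    refine le_of_tendsto hd (Filter.Eventually.of_forall fun τ => ?_)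
    exact (hosc i (F τ) (Set.mem_range_self τ) B hB x hxB (pt B) hptB).le
  calc dist (f x) (F σ x)
      ≤ dist (f x) (f (pt B)) + dist (f (pt B)) (F σ (pt B)) + dist (F σ (pt B)) (F σ x) :=
        dist_triangle4 _ _ _ _
    _ < ε / 4 + ε / 4 + ε / 4 := by
        rw [dist_comm (f (pt B))]
        exact add_lt_add (add_lt_add_of_le_of_lt h1 h2) h3
    _ < ε := by linarith
end

section
/- Let X be a locally compact topological space and (Y,d) a boundedly compact metric space. A subset E of LB(X,Y) is compact in the topology of uniform convergence on compact sets if and only if E is closed in (LB(X,Y), τ_UC), pointwise bounded, and finitely equicontinuous. -/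
open Set Filter Topology Metric Bornology UniformConvergence
open scoped Uniformity

section Aux

variable {X Y : Type*} [TopologicalSpace X] [MetricSpace Y]

open Classical in
noncomputable def pickPt [Nonempty X] (B : Set X) : X :=
  if h : B.Nonempty then h.some else Classical.arbitrary X

lemma pickPt_mem [Nonempty X] {B : Set X} (h : B.Nonempty) : pickPt B ∈ B := by
  classical
  simp only [pickPt]
  rw [dif_pos h]
  exact h.some_mem

/-- A single locally bounded function has small oscillation on a finite family near any point. -/
lemma single_osc [ProperSpace Y] {f : X → Y} (hf : LocBounded f) (x : X) {ε : ℝ} (hε : 0 < ε) :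
    ∃ 𝓑 : Finset (Set X), ⋃₀ (𝓑 : Set (Set X)) ∈ 𝓝 x ∧
      ∀ B ∈ 𝓑, ∀ p ∈ B, ∀ q ∈ B, dist (f p) (f q) < ε := by
  classical
  obtain ⟨U, hUo, hxU, hUb⟩ := hf x
  have htb : TotallyBounded (f '' U) :=
    hUb.isCompact_closure.totallyBounded.subset subset_closure
  obtain ⟨c, hcfin, hcov⟩ := totallyBounded_iff.1 htb (ε / 2) (by linarith)
  refine ⟨hcfin.toFinset.image (fun y => U ∩ f ⁻¹' ball y (ε / 2)), ?_, ?_⟩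
  · refine mem_of_superset (hUo.mem_nhds hxU) ?_
    intro p hp
    obtain ⟨y, hy, hpy⟩ := mem_iUnion₂.1 (hcov ⟨p, hp, rfl⟩)
    exact ⟨U ∩ f ⁻¹' ball y (ε / 2), by
      simp only [Finset.coe_image, Set.mem_image, Finset.mem_coe, Set.Finite.mem_toFinset]
      exact ⟨y, hy, rfl⟩, hp, hpy⟩
  · intro B hB p hp q hq
    simp only [Finset.mem_image, Set.Finite.mem_toFinset] at hB
    obtain ⟨y, _, rfl⟩ := hB
    have h1 : dist (f p) y < ε / 2 := hp.2
    have h2 : dist (f q) y < ε / 2 := hq.2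
    calc dist (f p) (f q) ≤ dist (f p) y + dist (f q) y := dist_triangle_right _ _ _
      _ < ε := by linarith

/-- Finitely many locally bounded functions have simultaneous small oscillation. -/
lemma finite_osc [ProperSpace Y] {T : Finset (X → Y)}
    (hTb : ∀ f ∈ T, LocBounded f) (x : X) {ε : ℝ} (hε : 0 < ε) :
    ∃ 𝓑 : Finset (Set X), ⋃₀ (𝓑 : Set (Set X)) ∈ 𝓝 x ∧
      ∀ f ∈ T, ∀ B ∈ 𝓑, ∀ p ∈ B, ∀ q ∈ B, dist (f p) (f q) < ε := by
  classical
  induction T using Finset.induction_on with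
  | empty => exact ⟨{Set.univ}, by simp, by simp⟩
  | @insert f T hfT ih =>
      obtain ⟨𝓑₁, h𝓑₁n, h𝓑₁⟩ := ih (fun g hg => hTb g (Finset.mem_insert_of_mem hg))
      obtain ⟨𝓑₂, h𝓑₂n, h𝓑₂⟩ := single_osc (hTb f (Finset.mem_insert_self _ _)) x hε
      refine ⟨Finset.image₂ (· ∩ ·) 𝓑₁ 𝓑₂, ?_, ?_⟩
      · refine mem_of_superset (inter_mem h𝓑₁n h𝓑₂n) ?_
        rintro p ⟨hp₁, hp₂⟩
        obtain ⟨A, hA, hpA⟩ := hp₁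
        obtain ⟨B, hB, hpB⟩ := hp₂
        exact ⟨A ∩ B, by
          simp only [Finset.coe_image₂, Set.mem_image2]
          exact ⟨A, hA, B, hB, rfl⟩, hpA, hpB⟩
      · intro g hg C hC p hp q hq
        simp only [Finset.mem_image₂] at hC
        obtain ⟨A, hA, B, hB, rfl⟩ := hC
        rcases Finset.mem_insert.1 hg with rfl | hg'
        · exact h𝓑₂ B hB p hp.2 q hq.2
        · exact h𝓑₁ g hg' A hA p hp.1 q hq.1

/-- Pointwise bounded + finitely equicontinuous families are uniformly bounded on compacts. -/
lemma unif_bdd_on_compact {E : Set (X → Y)}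
    (hb : ∀ p : X, IsBounded ((fun f => f p) '' E)) (heq : FinEquicont E)
    {K : Set X} (hK : IsCompact K) : IsBounded (⋃ f ∈ E, f '' K) := by
  classical
  rcases K.eq_empty_or_nonempty with rfl | hKne
  · simp
  haveI : Nonempty X := ⟨hKne.some⟩
  choose 𝓑 hU hosc using fun y => heq y 1 one_pos
  obtain ⟨t, _, hcov⟩ := hK.elim_nhds_subcover (fun y => ⋃₀ ((𝓑 y : Finset (Set X)) : Set (Set X)))
    (fun y _ => hU y)
  have hbdd : IsBounded (⋃ y ∈ (t : Set X), ⋃ B ∈ ((𝓑 y : Finset (Set X)) : Set (Set X)),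
      thickening 1 ((fun f => f (pickPt B)) '' E)) := by
    refine (isBounded_biUnion t.finite_toSet).2 fun y _ => ?_
    exact (isBounded_biUnion (𝓑 y).finite_toSet).2 fun B _ => (hb _).thickening
  refine hbdd.subset ?_
  rintro z hz
  simp only [Set.mem_iUnion] at hz
  obtain ⟨f, hf, p, hp, rfl⟩ := hz
  obtain ⟨y, hy, hpy⟩ := mem_iUnion₂.1 (hcov hp)
  obtain ⟨B, hB, hpB⟩ := hpy
  have hq : pickPt B ∈ B := pickPt_mem ⟨p, hpB⟩
  simp only [Set.mem_iUnion]
  refine ⟨y, hy, B, hB, ?_⟩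
  rw [mem_thickening_iff]
  exact ⟨f (pickPt B), ⟨f, hf, rfl⟩, hosc y f hf B (by exact_mod_cast hB) p hpB _ hq⟩

end Aux


theorem stmt7 {X Y : Type*} [TopologicalSpace X] [LocallyCompactSpace X]
    [MetricSpace Y] [ProperSpace Y]
    (E : Set (X →ᵤ[{K : Set X | IsCompact K}] Y))
    (hE : ∀ f ∈ E, LocBounded (UniformOnFun.toFun {K : Set X | IsCompact K} f)) :
    IsCompact E ↔
      (IsClosed ((Subtype.val ⁻¹' E) :
          Set {f : X →ᵤ[{K : Set X | IsCompact K}] Y //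
            LocBounded (UniformOnFun.toFun {K : Set X | IsCompact K} f)}) ∧
        (∀ x : X, IsBounded
          ((fun f : X →ᵤ[{K : Set X | IsCompact K}] Y =>
            UniformOnFun.toFun {K : Set X | IsCompact K} f x) '' E)) ∧
        FinEquicont ((UniformOnFun.toFun {K : Set X | IsCompact K}) '' E)) := by
  classical
  have hKNE : {K : Set X | IsCompact K}.Nonempty := ⟨∅, isCompact_empty⟩
  have hKDIR : DirectedOn (· ⊆ ·) {K : Set X | IsCompact K} := fun K₁ h₁ K₂ h₂ =>
    ⟨K₁ ∪ K₂, h₁.union h₂, subset_union_left, subset_union_right⟩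
  have hKCOV : ⋃₀ {K : Set X | IsCompact K} = univ := by
    refine eq_univ_of_forall fun x => ?_
    exact ⟨{x}, isCompact_singleton, rfl⟩
  haveI : T2Space (X →ᵤ[{K : Set X | IsCompact K}] Y) := UniformOnFun.t2Space_of_covering hKCOV
  constructor
  · -- forward
    intro hc
    refine ⟨(hc.isClosed).preimage continuous_subtype_val, ?_, ?_⟩
    · intro x
      have hev : UniformContinuous
          ((Function.eval x : (X → Y) → Y) ∘ UniformOnFun.toFun {K : Set X | IsCompact K}) :=
        UniformOnFun.uniformContinuous_eval_of_mem Y {K : Set X | IsCompact K} (mem_singleton x) isCompact_singleton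
      exact (hc.image hev.continuous).isBounded
    · intro x ε hε
      obtain ⟨K, hKc, hKn⟩ := exists_compact_mem_nhds x
      have hd : UniformOnFun.gen {K : Set X | IsCompact K} K {p : Y × Y | dist p.1 p.2 < ε / 4} ∈ 𝓤 (X →ᵤ[{K : Set X | IsCompact K}] Y) :=
        UniformOnFun.gen_mem_uniformity _ _ hKc (dist_mem_uniformity (by linarith))
      obtain ⟨t, htE, htfin, hcov⟩ := totallyBounded_iff_subset.1 hc.totallyBounded _ hd
      -- the finite set of plain functions
      have hT : ∀ f ∈ htfin.toFinset.image (UniformOnFun.toFun {K : Set X | IsCompact K}), LocBounded f := by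
        intro f hf
        simp only [Finset.mem_image, Set.Finite.mem_toFinset] at hf
        obtain ⟨g, hg, rfl⟩ := hf
        exact hE g (htE hg)
      obtain ⟨𝓑₀, h𝓑₀n, h𝓑₀⟩ := finite_osc hT x (show (0:ℝ) < ε / 4 by linarith)
      refine ⟨𝓑₀.image (· ∩ K), ?_, ?_⟩
      · refine mem_of_superset (inter_mem h𝓑₀n hKn) ?_
        rintro p ⟨hp₁, hp₂⟩
        obtain ⟨B, hB, hpB⟩ := hp₁
        exact ⟨B ∩ K, by
          simp only [Finset.coe_image, Set.mem_image, Finset.mem_coe]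
          exact ⟨B, hB, rfl⟩, hpB, hp₂⟩
      · rintro f ⟨g, hg, rfl⟩ B' hB' p hp q hq
        simp only [Finset.mem_image] at hB'
        obtain ⟨B, hB, rfl⟩ := hB'
        obtain ⟨h, hh, hgh⟩ := mem_iUnion₂.1 (hcov hg)
        have hgh' : ∀ z ∈ K, dist (UniformOnFun.toFun {K : Set X | IsCompact K} g z) (UniformOnFun.toFun {K : Set X | IsCompact K} h z) < ε / 4 :=
          fun z hz => hgh z hz
        have hhT : UniformOnFun.toFun {K : Set X | IsCompact K} h ∈ htfin.toFinset.image (UniformOnFun.toFun {K : Set X | IsCompact K}) := by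
          simp only [Finset.mem_image, Set.Finite.mem_toFinset]
          exact ⟨h, hh, rfl⟩
        have h1 := hgh' p hp.2
        have h2 := h𝓑₀ _ hhT B hB p hp.1 q hq.1
        have h3 := hgh' q hq.2
        calc dist (UniformOnFun.toFun {K : Set X | IsCompact K} g p) (UniformOnFun.toFun {K : Set X | IsCompact K} g q)
            ≤ dist (UniformOnFun.toFun {K : Set X | IsCompact K} g p) (UniformOnFun.toFun {K : Set X | IsCompact K} h p)
              + dist (UniformOnFun.toFun {K : Set X | IsCompact K} h p) (UniformOnFun.toFun {K : Set X | IsCompact K} h q)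
              + dist (UniformOnFun.toFun {K : Set X | IsCompact K} h q) (UniformOnFun.toFun {K : Set X | IsCompact K} g q) :=
            dist_triangle4 _ _ _ _
          _ < ε := by
            have h3' := h3
            rw [dist_comm] at h3'
            linarith
  · -- backward
    rintro ⟨hclosed, hb, heq⟩
    have hb' : ∀ p : X, IsBounded ((fun f : X → Y => f p) '' ((UniformOnFun.toFun {K : Set X | IsCompact K}) '' E)) := by
      intro p
      rw [Set.image_image]
      exact hb p
    -- uniform boundedness on compacts for the plain family
    have hbddK : ∀ {K : Set X}, IsCompact K →
        IsBounded (⋃ f ∈ (UniformOnFun.toFun {K : Set X | IsCompact K}) '' E, f '' K) :=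
      fun {K} hK => unif_bdd_on_compact hb' heq hK
    -- E is closed in the full space
    have hEc : IsClosed E := by
      refine isClosed_of_closure_subset fun g hg => ?_
      have hgLB : LocBounded (UniformOnFun.toFun {K : Set X | IsCompact K} g) := by
        intro x
        obtain ⟨K, hKc, hKn⟩ := exists_compact_mem_nhds x
        have hW : {h | ∀ z ∈ K, (UniformOnFun.toFun {K : Set X | IsCompact K} g z, UniformOnFun.toFun {K : Set X | IsCompact K} h z) ∈
            {p : Y × Y | dist p.1 p.2 < 1}} ∈ 𝓝 g :=
          UniformOnFun.gen_mem_nhds _ _ g hKc (dist_mem_uniformity one_pos)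
        obtain ⟨f, hfW, hfE⟩ := mem_closure_iff_nhds.1 hg _ hW
        refine ⟨interior K, isOpen_interior, mem_interior_iff_mem_nhds.2 hKn,
          ((hbddK hKc).thickening (δ := 1)).subset ?_⟩
        rintro z ⟨p, hp, rfl⟩
        rw [mem_thickening_iff]
        refine ⟨UniformOnFun.toFun {K : Set X | IsCompact K} f p, ?_, hfW p (interior_subset hp)⟩
        exact mem_iUnion₂.2 ⟨UniformOnFun.toFun {K : Set X | IsCompact K} f, ⟨f, hfE, rfl⟩,
          ⟨p, interior_subset hp, rfl⟩⟩
      have hmem : (⟨g, hgLB⟩ : {f : X →ᵤ[{K : Set X | IsCompact K}] Y // LocBounded (UniformOnFun.toFun {K : Set X | IsCompact K} f)}) ∈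
          closure (Subtype.val ⁻¹' E) := by
        rw [closure_subtype]
        have himg : (Subtype.val '' (Subtype.val ⁻¹'  E :
            Set {f : X →ᵤ[{K : Set X | IsCompact K}] Y // LocBounded (UniformOnFun.toFun {K : Set X | IsCompact K} f)})) = E := by
          ext f
          constructor
          · rintro ⟨⟨f', hf'⟩, hfe, rfl⟩; exact hfe
          · intro hf; exact ⟨⟨f, hE f hf⟩, hf, rfl⟩
        rw [himg]
        exact hg
      exact hclosed.closure_subset hmem
    rw [isCompact_iff_totallyBounded_isComplete]
    refine ⟨?_, hEc.isComplete⟩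
    -- total boundedness
    refine (UniformOnFun.hasBasis_uniformity X Y {K : Set X | IsCompact K} hKNE hKDIR).totallyBounded_iff.2 ?_
    rintro ⟨K, V⟩ ⟨hK, hV⟩
    rcases E.eq_empty_or_nonempty with hE0 | hEne
    · exact ⟨∅, finite_empty, by simp [hE0]⟩
    obtain ⟨ε, hε, hεV⟩ := mem_uniformity_dist.1 hV
    by_cases hX : Nonempty X
    swap
    · refine ⟨{hEne.some}, finite_singleton _, fun f _ => ?_⟩
      refine mem_iUnion₂.2 ⟨hEne.some, rfl, fun p hp => ?_⟩
      exact absurd ⟨p⟩ hX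
    -- construct the covering family over K
    choose 𝓑 hU hosc using fun y => heq y (ε / 4) (by linarith)
    obtain ⟨t, _, hcov⟩ := hK.elim_nhds_subcover
      (fun y => ⋃₀ ((𝓑 y : Finset (Set X)) : Set (Set X))) (fun y _ => hU y)
    set 𝓕 : Finset (Set X) := t.biUnion 𝓑 with h𝓕
    -- the product of closures of pointwise images is compact
    have hPc : IsCompact (Set.pi (Set.univ : Set ↥𝓕)
        (fun B => closure ((fun f => UniformOnFun.toFun {K : Set X | IsCompact K} f (pickPt (B : Set X))) '' E))) :=
      isCompact_univ_pi fun B => (hb _).isCompact_closure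
    set Φ : (X →ᵤ[{K : Set X | IsCompact K}] Y) → (↥𝓕 → Y) :=
      fun f B => UniformOnFun.toFun {K : Set X | IsCompact K} f (pickPt (B : Set X)) with hΦ
    have hΦtb : TotallyBounded (Φ '' E) := by
      refine hPc.totallyBounded.subset ?_
      rintro _ ⟨f, hf, rfl⟩
      intro B _
      exact subset_closure ⟨f, hf, rfl⟩
    obtain ⟨s, hsE, hsfin, hscov⟩ := totallyBounded_iff_subset.1 hΦtb _
      (dist_mem_uniformity (show (0:ℝ) < ε / 4 by linarith))
    have hchoice : ∀ y ∈ s, ∃ g ∈ E, Φ g = y := fun y hy => by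
      obtain ⟨g, hg, hgy⟩ := hsE hy; exact ⟨g, hg, hgy⟩
    haveI : Nonempty (X →ᵤ[{K : Set X | IsCompact K}] Y) := ⟨hEne.some⟩
    choose! ψ hψE hψΦ using hchoice
    refine ⟨ψ '' s, hsfin.image _, fun f hf => ?_⟩
    obtain ⟨y, hy, hfy⟩ := mem_iUnion₂.1 (hscov ⟨f, hf, rfl⟩)
    have hdist : dist (Φ f) (Φ (ψ y)) < ε / 4 := by rw [hψΦ y hy]; exact hfy
    refine mem_iUnion₂.2 ⟨ψ y, ⟨y, hy, rfl⟩, fun p hp => ?_⟩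
    obtain ⟨y', hy', hpy'⟩ := mem_iUnion₂.1 (hcov hp)
    obtain ⟨B, hB, hpB⟩ := hpy'
    have hB𝓕 : B ∈ 𝓕 := Finset.mem_biUnion.2 ⟨y', hy', by exact_mod_cast hB⟩
    have hq : pickPt B ∈ B := pickPt_mem ⟨p, hpB⟩
    have h1 : dist (UniformOnFun.toFun {K : Set X | IsCompact K} f p) (UniformOnFun.toFun {K : Set X | IsCompact K} f (pickPt B)) < ε / 4 :=
      hosc y' _ ⟨f, hf, rfl⟩ B (by exact_mod_cast hB) p hpB _ hq
    have h3 : dist (UniformOnFun.toFun {K : Set X | IsCompact K} (ψ y) (pickPt B))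
        (UniformOnFun.toFun {K : Set X | IsCompact K} (ψ y) p) < ε / 4 :=
      hosc y' _ ⟨ψ y, hψE y hy, rfl⟩ B (by exact_mod_cast hB) _ hq p hpB
    have h2 : dist (Φ f ⟨B, hB𝓕⟩) (Φ (ψ y) ⟨B, hB𝓕⟩) < ε / 4 :=
      lt_of_le_of_lt (dist_le_pi_dist _ _ _) hdist
    have h2' : dist (UniformOnFun.toFun {K : Set X | IsCompact K} f (pickPt B))
        (UniformOnFun.toFun {K : Set X | IsCompact K} (ψ y) (pickPt B)) < ε / 4 := h2
    refine hεV ?_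
    calc dist (UniformOnFun.toFun {K : Set X | IsCompact K} f p) (UniformOnFun.toFun {K : Set X | IsCompact K} (ψ y) p)
        ≤ dist (UniformOnFun.toFun {K : Set X | IsCompact K} f p) (UniformOnFun.toFun {K : Set X | IsCompact K} f (pickPt B))
          + dist (UniformOnFun.toFun {K : Set X | IsCompact K} f (pickPt B)) (UniformOnFun.toFun {K : Set X | IsCompact K} (ψ y) (pickPt B))
          + dist (UniformOnFun.toFun {K : Set X | IsCompact K} (ψ y) (pickPt B)) (UniformOnFun.toFun {K : Set X | IsCompact K} (ψ y) p) :=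
        dist_triangle4 _ _ _ _
      _ < ε := by linarith
end

section
/- Let X be a locally compact topological space, (Y,d) a boundedly compact metric space, and suppose E ⊆ LB(X,Y) is compact in the topology of uniform convergence on compact sets. Then E is finitely equicontinuous. -/
open Set Filter Topology Metric Bornology UniformConvergence Uniformity

/-- A locally bounded function maps compact sets to bounded sets. -/
lemma LocBounded.isBounded_image {X Y : Type*} [TopologicalSpace X] [MetricSpace Y]
    {f : X → Y} (hf : LocBounded f) {K : Set X} (hK : IsCompact K) :
    IsBounded (f '' K) := by
  choose U hUo hxU hUb using hf
  obtain ⟨t, -, ht⟩ := hK.elim_nhds_subcover U (fun x _ => (hUo x).mem_nhds (hxU x))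
  have : f '' K ⊆ ⋃ x ∈ t, f '' U x := by
    rintro _ ⟨p, hp, rfl⟩
    obtain ⟨x, hx, hpx⟩ := mem_iUnion₂.1 (ht hp)
    exact mem_iUnion₂.2 ⟨x, hx, mem_image_of_mem f hpx⟩
  exact (isBounded_biUnion t.finite_toSet |>.2 fun x _ => hUb x).subset this

theorem stmt8 {X Y : Type*} [TopologicalSpace X] [LocallyCompactSpace X]
    [MetricSpace Y] [ProperSpace Y]
    (E : Set (X →ᵤ[{K : Set X | IsCompact K}] Y))
    (hE : ∀ f ∈ E, LocBounded (UniformOnFun.toFun {K : Set X | IsCompact K} f))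
    (hc : IsCompact E) :
    FinEquicont ((UniformOnFun.toFun {K : Set X | IsCompact K}) '' E) := by
  set 𝔖 : Set (Set X) := {K : Set X | IsCompact K}
  intro x ε hε
  have hε5 : (0 : ℝ) < ε / 5 := by linarith
  -- compact neighbourhood of x
  obtain ⟨K, hKc, hKn⟩ := exists_compact_mem_nhds x
  -- total boundedness: finite ε/5-net of functions in E, uniformly on K
  have hgen : UniformOnFun.gen 𝔖 K {p : Y × Y | dist p.1 p.2 < ε / 5} ∈
      𝓤 (X →ᵤ[𝔖] Y) :=
    UniformOnFun.gen_mem_uniformity _ _ hKc (Metric.dist_mem_uniformity hε5)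
  obtain ⟨T, hTE, hTfin, hTcov⟩ := totallyBounded_iff_subset.1 hc.totallyBounded _ hgen
  -- for each g ∈ T, a finite ε/5-net of g '' K in Y
  have hnet : ∀ g : T, ∃ C : Set Y, C.Finite ∧
      (UniformOnFun.toFun 𝔖 (g : X →ᵤ[𝔖] Y)) '' K ⊆ ⋃ c ∈ C, ball c (ε / 5) := by
    rintro ⟨g, hg⟩
    have hb : IsBounded ((UniformOnFun.toFun 𝔖 g) '' K) :=
      (hE g (hTE hg)).isBounded_image hKc
    have htb : TotallyBounded ((UniformOnFun.toFun 𝔖 g) '' K) :=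
      hb.isCompact_closure.totallyBounded.subset subset_closure
    obtain ⟨C, hCfin, hCcov⟩ := Metric.totallyBounded_iff.1 htb _ hε5
    exact ⟨C, hCfin, hCcov⟩
  choose C hCfin hCcov using hnet
  haveI : Finite T := hTfin
  -- the finite family of sets
  have hBfin : ((fun χ : T → Y =>
      K ∩ ⋂ g : T, (UniformOnFun.toFun 𝔖 (g : X →ᵤ[𝔖] Y)) ⁻¹' ball (χ g) (ε / 5)) ''
      (univ.pi C)).Finite :=
    (Set.Finite.pi fun g => hCfin g).image _
  refine ⟨hBfin.toFinset, ?_, ?_⟩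
  · -- the union covers K, a neighbourhood of x
    refine mem_of_superset hKn fun p hp => ?_
    have hsel : ∀ g : T, ∃ c ∈ C g, UniformOnFun.toFun 𝔖 (g : X →ᵤ[𝔖] Y) p ∈ ball c (ε / 5) := by
      intro g
      have := hCcov g (mem_image_of_mem _ hp)
      simpa using this
    choose χ hχC hχball using hsel
    refine mem_sUnion.2
      ⟨K ∩ ⋂ g : T, (UniformOnFun.toFun 𝔖 (g : X →ᵤ[𝔖] Y)) ⁻¹' ball (χ g) (ε / 5), ?_, ?_⟩
    · exact Finset.mem_coe.2 (hBfin.mem_toFinset.2 (mem_image_of_mem _ fun g _ => hχC g))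
    · exact ⟨hp, mem_iInter.2 fun g => hχball g⟩
  · -- small oscillation
    rintro _ ⟨f, hf, rfl⟩ B hB p hp q hq
    rw [Set.Finite.mem_toFinset] at hB
    obtain ⟨χ, -, rfl⟩ := hB
    obtain ⟨g, hgT, hfg⟩ := mem_iUnion₂.1 (hTcov hf)
    have hfg' : ∀ z ∈ K, dist (UniformOnFun.toFun 𝔖 f z) (UniformOnFun.toFun 𝔖 g z) < ε / 5 :=
      fun z hz => hfg z hz
    have hpK := hp.1
    have hqK := hq.1
    have hgp : dist (UniformOnFun.toFun 𝔖 g p) (χ ⟨g, hgT⟩) < ε / 5 := by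
      have := mem_iInter.1 hp.2 ⟨g, hgT⟩
      simpa [mem_ball] using this
    have hgq : dist (UniformOnFun.toFun 𝔖 g q) (χ ⟨g, hgT⟩) < ε / 5 := by
      have := mem_iInter.1 hq.2 ⟨g, hgT⟩
      simpa [mem_ball] using this
    have h1 := hfg' p hpK
    have h2 := hfg' q hqK
    have hmid : dist (UniformOnFun.toFun 𝔖 g p) (UniformOnFun.toFun 𝔖 g q) ≤
        dist (UniformOnFun.toFun 𝔖 g p) (χ ⟨g, hgT⟩) +
        dist (UniformOnFun.toFun 𝔖 g q) (χ ⟨g, hgT⟩) :=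
      dist_triangle_right _ _ _
    have h3 : dist (UniformOnFun.toFun 𝔖 f p) (UniformOnFun.toFun 𝔖 f q) ≤
        dist (UniformOnFun.toFun 𝔖 f p) (UniformOnFun.toFun 𝔖 g p) +
        dist (UniformOnFun.toFun 𝔖 g p) (UniformOnFun.toFun 𝔖 g q) +
        dist (UniformOnFun.toFun 𝔖 g q) (UniformOnFun.toFun 𝔖 f q) :=
      dist_triangle4 _ _ _ _
    have h4 : dist (UniformOnFun.toFun 𝔖 g q) (UniformOnFun.toFun 𝔖 f q) =
        dist (UniformOnFun.toFun 𝔖 f q) (UniformOnFun.toFun 𝔖 g q) := dist_comm _ _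
    linarith
end

section
/- Let X be a compact topological space and (Y,d) a boundedly compact metric space. If (f_n) is a sequence of quasicontinuous functions from X to Y that is uniformly bounded and finitely equicontinuous, then there is a subsequence (f_{n_k}) converging uniformly on X to some quasicontinuous function. -/
open Set Filter Topology Metric Bornology

/-- Quasicontinuity of `f` at `x`. -/
def QuasiContAt {X Y : Type*} [TopologicalSpace X] [TopologicalSpace Y]
    (f : X → Y) (x : X) : Prop :=
  ∀ V : Set Y, IsOpen V → f x ∈ V → ∀ U : Set X, IsOpen U → x ∈ U →
    ∃ W : Set X, IsOpen W ∧ W.Nonempty ∧ W ⊆ U ∧ f '' W ⊆ V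

/-- Quasicontinuity. -/
def QuasiCont {X Y : Type*} [TopologicalSpace X] [TopologicalSpace Y] (f : X → Y) : Prop :=
  ∀ x : X, QuasiContAt f x

theorem stmt10 {X Y : Type*} [TopologicalSpace X] [CompactSpace X]
    [MetricSpace Y] [ProperSpace Y]
    (f : ℕ → X → Y) (hq : ∀ n, QuasiCont (f n))
    (hub : ∃ K : Set Y, IsCompact K ∧ ∀ n, Set.range (f n) ⊆ K)
    (hfe : FinEquicont (Set.range f)) :
    ∃ φ : ℕ → ℕ, StrictMono φ ∧ ∃ g : X → Y, QuasiCont g ∧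
      TendstoUniformly (fun k => f (φ k)) g atTop := by
  classical
  obtain ⟨K, hK, hKf⟩ := hub
  rcases isEmpty_or_nonempty X with hX | hX
  · refine ⟨id, strictMono_id, fun x => isEmptyElim x, fun x => isEmptyElim x, ?_⟩
    intro u hu
    filter_upwards with n x
    exact isEmptyElim x
  -- Step 1: for every m, a finite cover with oscillation < 1/(m+1)
  have hcov : ∀ m : ℕ, ∃ 𝓒 : Finset (Set X), (∀ x : X, ∃ C ∈ 𝓒, x ∈ C) ∧
      ∀ n : ℕ, ∀ C ∈ 𝓒, ∀ p ∈ C, ∀ q ∈ C, dist (f n p) (f n q) < 1/(m+1) := by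
    intro m
    have hpos : (0:ℝ) < 1/(m+1) := by positivity
    choose 𝓑 hnb hosc using fun x => hfe x (1/(m+1)) hpos
    obtain ⟨t, ht⟩ := isCompact_univ.elim_finite_subcover
      (fun x => interior (⋃₀ (𝓑 x : Set (Set X)))) (fun x => isOpen_interior)
      (fun x _ => mem_iUnion.2 ⟨x, mem_interior_iff_mem_nhds.2 (hnb x)⟩)
    refine ⟨t.biUnion 𝓑, ?_, ?_⟩
    · intro x
      have hx : x ∈ ⋃ y ∈ t, interior (⋃₀ (𝓑 y : Set (Set X))) := ht (mem_univ x)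
      obtain ⟨y, hyt, hy⟩ := mem_iUnion₂.1 hx
      obtain ⟨C, hC, hxC⟩ := interior_subset hy
      exact ⟨C, Finset.mem_biUnion.2 ⟨y, hyt, hC⟩, hxC⟩
    · intro n C hC p hp q hq
      obtain ⟨y, hy, hCy⟩ := Finset.mem_biUnion.1 hC
      exact hosc y (f n) ⟨n, rfl⟩ C hCy p hp q hq
  choose 𝓒 hcov hosc using hcov
  choose c hcC hxc using fun m x => hcov m x
  -- pick a representative point in each chosen set
  let pt : Set X → X := fun C => if h : C.Nonempty then h.some else Classical.arbitrary X
  let r : ℕ → X → X := fun m x => pt (c m x)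
  have hrC : ∀ m x, r m x ∈ c m x := by
    intro m x
    have h : (c m x).Nonempty := ⟨x, hxc m x⟩
    simp only [r, pt, dif_pos h]
    exact h.some_mem
  have hrd : ∀ n m x, dist (f n x) (f n (r m x)) < 1/(m+1) :=
    fun n m x => hosc m n _ (hcC m x) x (hxc m x) _ (hrC m x)
  set P : Set X := ⋃ m, Set.range (r m) with hPdef
  have hPc : P.Countable := by
    refine Set.countable_iUnion (fun m => Set.Countable.mono ?_
      (((𝓒 m).finite_toSet.image pt).countable))
    rintro _ ⟨x, rfl⟩
    exact ⟨c m x, hcC m x, rfl⟩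
  haveI : Countable ↥P := hPc.to_subtype
  have hrP : ∀ m x, r m x ∈ P := fun m x => mem_iUnion.2 ⟨m, ⟨x, rfl⟩⟩
  -- Step 2: extract a subsequence converging pointwise on P
  have hmem : ∀ n : ℕ, (fun p : P => f n (p : X)) ∈ Set.univ.pi (fun _ : P => K) :=
    fun n p _ => hKf n ⟨_, rfl⟩
  obtain ⟨L, -, φ, hφ, hL⟩ := (isCompact_univ_pi (fun _ : P => hK)).tendsto_subseq hmem
  have hLp : ∀ p : P, Tendsto (fun k => f (φ k) (p : X)) atTop (𝓝 (L p)) := by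
    intro p
    have := tendsto_pi_nhds.1 hL p
    simpa [Function.comp] using this
  -- Step 3: the subsequence is uniformly Cauchy
  have hUC : UniformCauchySeqOn (fun k => f (φ k)) atTop Set.univ := by
    rw [Metric.uniformCauchySeqOn_iff]
    intro ε hε
    obtain ⟨m, hm⟩ := exists_nat_one_div_lt (show (0:ℝ) < ε/3 by linarith)
    set S : Set ↥P := {p : ↥P | (p : X) ∈ (𝓒 m).image pt} with hSdef
    have hSfin : S.Finite :=
      Set.Finite.preimage (Subtype.coe_injective.injOn) ((𝓒 m).image pt).finite_toSet
    have hev : ∀ᶠ k in atTop, ∀ p ∈ S, dist (f (φ k) (p : X)) (L p) < ε/6 := by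
      rw [Filter.eventually_all_finite hSfin]
      intro p hp
      have := (hLp p) (Metric.ball_mem_nhds (L p) (show (0:ℝ) < ε/6 by linarith))
      simpa [Metric.mem_ball] using this
    obtain ⟨N, hN⟩ := eventually_atTop.1 hev
    refine ⟨N, fun k hk l hl x _ => ?_⟩
    set p : ↥P := ⟨r m x, hrP m x⟩ with hpdef
    have hpS : p ∈ S := by
      simp only [hSdef, Set.mem_setOf_eq, Finset.mem_image]
      exact ⟨c m x, hcC m x, rfl⟩
    have h1 := hrd (φ k) m x
    have h2 := hrd (φ l) m x
    have h3 := hN k hk p hpS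
    have h4 := hN l hl p hpS
    have hT1 : dist (f (φ k) x) (f (φ l) x) ≤ dist (f (φ k) x) (f (φ k) (r m x))
        + dist (f (φ k) (r m x)) (f (φ l) (r m x))
        + dist (f (φ l) (r m x)) (f (φ l) x) := dist_triangle4 _ _ _ _
    have hT2 : dist (f (φ k) (r m x)) (f (φ l) (r m x)) ≤
        dist (f (φ k) (r m x)) (L p) + dist (f (φ l) (r m x)) (L p) :=
      dist_triangle_right _ _ _
    have hc2 : dist (f (φ l) (r m x)) (f (φ l) x) = dist (f (φ l) x) (f (φ l) (r m x)) :=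
      dist_comm _ _
    linarith
  -- Step 4: pointwise limit
  have hptC : ∀ x : X, ∃ y : Y, Tendsto (fun k => f (φ k) x) atTop (𝓝 y) := by
    intro x
    apply cauchySeq_tendsto_of_complete
    rw [Metric.cauchySeq_iff]
    intro ε hε
    obtain ⟨N, hN⟩ := Metric.uniformCauchySeqOn_iff.1 hUC ε hε
    exact ⟨N, fun k hk l hl => hN k hk l hl x (mem_univ x)⟩
  choose g hg using hptC
  have hTU : TendstoUniformly (fun k => f (φ k)) g atTop := by
    rw [← tendstoUniformlyOn_univ]
    exact hUC.tendstoUniformlyOn_of_tendsto (fun x _ => hg x)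
  -- Step 5: the limit is quasicontinuous
  have hqg : QuasiCont g := by
    intro x V hV hxV U hU hxU
    obtain ⟨r0, hr0, hball⟩ := Metric.isOpen_iff.1 hV _ hxV
    obtain ⟨k, hk⟩ := (Metric.tendstoUniformly_iff.1 hTU (r0/3) (by linarith)).exists
    obtain ⟨W, hWo, hWne, hWU, hWV⟩ := hq (φ k) x (Metric.ball (f (φ k) x) (r0/3))
      Metric.isOpen_ball (Metric.mem_ball_self (by linarith)) U hU hxU
    refine ⟨W, hWo, hWne, hWU, ?_⟩
    rintro _ ⟨w, hw, rfl⟩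
    apply hball
    have h1 := hk w
    have h2 : dist (f (φ k) w) (f (φ k) x) < r0/3 := by
      have := hWV ⟨w, hw, rfl⟩
      simpa [Metric.mem_ball] using this
    have h3 := hk x
    rw [Metric.mem_ball]
    have hT : dist (g w) (g x) ≤ dist (g w) (f (φ k) w) + dist (f (φ k) w) (f (φ k) x)
        + dist (f (φ k) x) (g x) := dist_triangle4 _ _ _ _
    have hc1 : dist (g w) (f (φ k) w) = dist (f (φ k) w) (g w) := dist_comm _ _
    have hc3 : dist (f (φ k) x) (g x) = dist (g x) (f (φ k) x) := dist_comm _ _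
    linarith
  exact ⟨φ, hφ, g, hqg, hTU⟩
end

section
/- Let X be a compact topological space. If (f_n) is a sequence of lower semicontinuous functions from X to ℝ that is uniformly bounded and finitely equicontinuous, then there is a subsequence (f_{n_k}) converging uniformly on X. -/
open Set Filter Topology Metric Bornology

open scoped Uniformity UniformConvergence

/-- Key step: from uniform boundedness and finite equicontinuity on a compact space,
extract, for each `ε > 0`, a finite `ε`-net among the functions `f n`. -/
lemma exists_finite_net {X : Type*} [TopologicalSpace X] [CompactSpace X] [Nonempty X]
    (f : ℕ → X → ℝ) (hub : ∃ M : ℝ, ∀ n, ∀ x, |f n x| ≤ M)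
    (hfe : FinEquicont (Set.range f)) {ε : ℝ} (hε : 0 < ε) :
    ∃ N : Finset ℕ, ∀ n, ∃ m ∈ N, ∀ x, dist (f n x) (f m x) < ε := by
  classical
  obtain ⟨M, hM⟩ := hub
  have hε3 : 0 < ε / 3 := by linarith
  -- choose, for each point, a finite family with small oscillation
  have key : ∀ x : X, ∃ 𝓑 : Finset (Set X), ⋃₀ (𝓑 : Set (Set X)) ∈ 𝓝 x ∧
      ∀ n, ∀ B ∈ 𝓑, ∀ p ∈ B, ∀ q ∈ B, dist (f n p) (f n q) < ε / 3 := by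
    intro x
    obtain ⟨𝓑, h1, h2⟩ := hfe x (ε / 3) hε3
    exact ⟨𝓑, h1, fun n => h2 (f n) (Set.mem_range_self n)⟩
  choose 𝓑 hnb hosc using key
  -- compactness : cover by finitely many of the interiors
  have hcov : (Set.univ : Set X) ⊆ ⋃ x : X, interior (⋃₀ (𝓑 x : Set (Set X))) := by
    intro x _
    exact Set.mem_iUnion.2 ⟨x, mem_interior_iff_mem_nhds.2 (hnb x)⟩
  obtain ⟨t, ht⟩ := isCompact_univ.elim_finite_subcover
    (fun x : X => interior (⋃₀ (𝓑 x : Set (Set X)))) (fun _ => isOpen_interior) hcov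
  set 𝓕 : Finset (Set X) := t.biUnion 𝓑 with h𝓕
  have hoscF : ∀ B ∈ 𝓕, ∀ n, ∀ p ∈ B, ∀ q ∈ B, dist (f n p) (f n q) < ε / 3 := by
    intro B hB n p hp q hq
    obtain ⟨y, _, hy⟩ := Finset.mem_biUnion.1 hB
    exact hosc y n B hy p hp q hq
  have hcoverF : ∀ x : X, ∃ B ∈ 𝓕, x ∈ B := by
    intro x
    obtain ⟨y, hy⟩ := Set.mem_iUnion.1 (ht (Set.mem_univ x))
    simp only [Set.mem_iUnion, exists_prop] at hy
    obtain ⟨hyt, hx⟩ := hy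
    obtain ⟨B, hB, hxB⟩ := interior_subset hx
    exact ⟨B, Finset.mem_biUnion.2 ⟨y, hyt, hB⟩, hxB⟩
  -- representatives
  have hx0 : Nonempty X := inferInstance
  set rep : {B // B ∈ 𝓕} → X :=
    fun B => if h : (B : Set X).Nonempty then h.choose else Classical.arbitrary X with hrep
  have hrepmem : ∀ (B : {B // B ∈ 𝓕}), (B : Set X).Nonempty → rep B ∈ (B : Set X) := by
    intro B h
    simp only [hrep, dif_pos h]
    exact h.choose_spec
  -- the vectors of values at representatives form a bounded set in a finite product
  set Φ : ℕ → ({B // B ∈ 𝓕} → ℝ) := fun n B => f n (rep B) with hΦ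
  have hM0 : 0 ≤ M := le_trans (abs_nonneg _) (hM 0 (Classical.arbitrary X))
  have hsub : Set.range Φ ⊆ Metric.closedBall 0 M := by
    rintro - ⟨n, rfl⟩
    rw [Metric.mem_closedBall]
    refine dist_pi_le_iff hM0 |>.2 fun B => ?_
    simpa [Real.dist_eq] using hM n (rep B)
  have htb : TotallyBounded (Set.range Φ) :=
    ((isCompact_closedBall (0 : {B // B ∈ 𝓕} → ℝ) M).totallyBounded).subset hsub
  obtain ⟨s, hssub, hsfin, hscov⟩ := totallyBounded_iff_subset.1 htb
    {p | dist p.1 p.2 < ε / 3} (dist_mem_uniformity hε3)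
  have hidx : ∀ y ∈ s, ∃ m, Φ m = y := fun y hy => hssub hy
  choose! idx hidx using hidx
  refine ⟨hsfin.toFinset.image idx, fun n => ?_⟩
  obtain ⟨y, hy, hny⟩ := Set.mem_iUnion₂.1 (hscov (Set.mem_range_self n))
  refine ⟨idx y, Finset.mem_image.2 ⟨y, hsfin.mem_toFinset.2 hy, rfl⟩, fun x => ?_⟩
  have hΦd : dist (Φ n) (Φ (idx y)) < ε / 3 := by
    rw [hidx y hy]; exact hny
  obtain ⟨B, hB, hxB⟩ := hcoverF x
  have hBne : (B : Set X).Nonempty := ⟨x, hxB⟩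
  have hrB : rep ⟨B, hB⟩ ∈ B := hrepmem ⟨B, hB⟩ hBne
  have h1 : dist (f n x) (f n (rep ⟨B, hB⟩)) < ε / 3 := hoscF B hB n x hxB _ hrB
  have h2 : dist (f n (rep ⟨B, hB⟩)) (f (idx y) (rep ⟨B, hB⟩)) < ε / 3 :=
    lt_of_le_of_lt (dist_le_pi_dist (Φ n) (Φ (idx y)) ⟨B, hB⟩) hΦd
  have h3 : dist (f (idx y) (rep ⟨B, hB⟩)) (f (idx y) x) < ε / 3 :=
    hoscF B hB (idx y) _ hrB x hxB
  calc dist (f n x) (f (idx y) x)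
      ≤ dist (f n x) (f n (rep ⟨B, hB⟩)) + dist (f n (rep ⟨B, hB⟩)) (f (idx y) (rep ⟨B, hB⟩))
        + dist (f (idx y) (rep ⟨B, hB⟩)) (f (idx y) x) := dist_triangle4 _ _ _ _
    _ < ε / 3 + ε / 3 + ε / 3 := by linarith
    _ = ε := by ring

theorem stmt11 {X : Type*} [TopologicalSpace X] [CompactSpace X]
    (f : ℕ → X → ℝ) (hlsc : ∀ n, LowerSemicontinuous (f n))
    (hub : ∃ M : ℝ, ∀ n, ∀ x, |f n x| ≤ M)
    (hfe : FinEquicont (Set.range f)) :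
    ∃ φ : ℕ → ℕ, StrictMono φ ∧ ∃ g : X → ℝ,
      TendstoUniformly (fun k => f (φ k)) g atTop := by
  classical
  rcases isEmpty_or_nonempty X with hX | hX
  · refine ⟨id, strictMono_id, fun x => 0, fun u hu => Eventually.of_forall fun k x => ?_⟩
    exact (hX.false x).elim
  -- work in the space of functions with the uniform convergence structure
  have hcg : IsCountablyGenerated (𝓤 (X →ᵤ ℝ)) := by
    obtain ⟨V, hV⟩ := exists_antitone_basis (𝓤 ℝ)
    exact (UniformFun.hasBasis_uniformity_of_basis X ℝ hV.toHasBasis).isCountablyGenerated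
  set u : ℕ → (X →ᵤ ℝ) := fun n => UniformFun.ofFun (f n) with hu
  have htb : TotallyBounded (Set.range u) := by
    rw [(UniformFun.hasBasis_uniformity_of_basis X ℝ Metric.uniformity_basis_dist).totallyBounded_iff]
    intro ε hε
    obtain ⟨N, hN⟩ := exists_finite_net f hub hfe (half_pos hε)
    refine ⟨(fun m => u m) '' N, ((N : Set ℕ).toFinite.image _), ?_⟩
    rintro - ⟨n, rfl⟩
    obtain ⟨m, hmN, hm⟩ := hN n
    refine Set.mem_iUnion₂.2 ⟨u m, Set.mem_image_of_mem _ hmN, ?_⟩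
    intro x
    exact lt_of_lt_of_le (hm x) (le_of_lt (half_lt_self hε))
  have hK : IsCompact (closure (Set.range u)) :=
    TotallyBounded.isCompact_of_isClosed htb.closure isClosed_closure
  obtain ⟨g, _, φ, hφ, hconv⟩ := hK.isSeqCompact (fun n => subset_closure (Set.mem_range_self n))
  refine ⟨φ, hφ, UniformFun.toFun g, ?_⟩
  exact UniformFun.tendsto_iff_tendstoUniformly.1 hconv
end

section
/- Let X be a compact topological space. If (f_n) is a sequence of upper semicontinuous functions from X to ℝ that is uniformly bounded and finitely equicontinuous, then there is a subsequence (f_{n_k}) converging uniformly on X, and the limit function is upper semicontinuous. -/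
open Set Filter Topology Metric Bornology

/-- A uniform limit of upper semicontinuous real functions is upper semicontinuous. -/
lemma usc_of_tendstoUniformly {X : Type*} [TopologicalSpace X] {F : ℕ → X → ℝ} {g : X → ℝ}
    (h : ∀ n, UpperSemicontinuous (F n)) (hg : TendstoUniformly F g atTop) :
    UpperSemicontinuous g := by
  intro x y hxy
  set ε : ℝ := (y - g x) / 3 with hε
  have hεpos : 0 < ε := by simp only [hε]; linarith
  rw [Metric.tendstoUniformly_iff] at hg
  obtain ⟨n, hn⟩ := (hg ε hεpos).exists
  have h1 : F n x < g x + ε := by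
    have := hn x
    rw [Real.dist_eq, abs_lt] at this
    linarith
  have h2 := h n x (g x + ε) h1
  filter_upwards [h2] with z hz
  have := hn z
  rw [Real.dist_eq, abs_lt] at this
  simp only [hε] at hz ⊢
  linarith

theorem stmt12 {X : Type*} [TopologicalSpace X] [CompactSpace X]
    (f : ℕ → X → ℝ) (husc : ∀ n, UpperSemicontinuous (f n))
    (hub : ∃ M : ℝ, ∀ n, ∀ x, |f n x| ≤ M)
    (hfe : FinEquicont (Set.range f)) :
    ∃ φ : ℕ → ℕ, StrictMono φ ∧ ∃ g : X → ℝ, UpperSemicontinuous g ∧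
      TendstoUniformly (fun k => f (φ k)) g atTop := by
  classical
  obtain ⟨M, hM⟩ := hub
  rcases isEmpty_or_nonempty X with hX | hX
  · refine ⟨id, strictMono_id, fun _ => 0, fun x => isEmptyElim x, ?_⟩
    intro u hu
    filter_upwards with n x
    exact isEmptyElim x
  -- Step 1: for every ε > 0 there is a finite cover on whose members all `f n` oscillate < ε.
  have cover : ∀ ε > (0 : ℝ), ∃ 𝓒 : Finset (Set X), (∀ x : X, ∃ B ∈ 𝓒, x ∈ B) ∧
      ∀ n, ∀ B ∈ 𝓒, ∀ p ∈ B, ∀ q ∈ B, |f n p - f n q| < ε := by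
    intro ε hε
    choose 𝓑 h1 h2 using fun x => hfe x ε hε
    obtain ⟨t, ht⟩ := isCompact_univ.elim_nhds_subcover
      (fun x => ⋃₀ ((𝓑 x : Finset (Set X)) : Set (Set X))) (fun x _ => h1 x)
    refine ⟨t.biUnion 𝓑, ?_, ?_⟩
    · intro x
      have hx : x ∈ ⋃ y ∈ t, ⋃₀ ((𝓑 y : Finset (Set X)) : Set (Set X)) := ht.2 (mem_univ x)
      simp only [mem_iUnion, mem_sUnion] at hx
      obtain ⟨y, hy, B, hB, hxB⟩ := hx
      exact ⟨B, Finset.mem_biUnion.2 ⟨y, hy, hB⟩, hxB⟩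
    · intro n B hB p hp q hq
      obtain ⟨y, _, hB'⟩ := Finset.mem_biUnion.1 hB
      have := h2 y (f n) (mem_range_self n) B hB' p hp q hq
      rwa [Real.dist_eq] at this
  choose 𝓒 hcov hosc using fun k : ℕ => cover (1 / (k + 1)) (by positivity)
  -- choice of points in the sets
  set pt : Set X → X := fun B => if h : B.Nonempty then h.choose else Classical.arbitrary X
    with hptdef
  have hpt : ∀ B : Set X, B.Nonempty → pt B ∈ B := by
    intro B hB
    simp only [hptdef, dif_pos hB]
    exact hB.choose_spec
  -- Step 2: extract a subsequence converging at all the chosen points.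
  set I := Σ k : ℕ, {B : Set X // B ∈ 𝓒 k} with hI
  set e : I → X := fun i => pt i.2.1 with he
  have hmem : ∀ n x, f n x ∈ Icc (-M) M := by
    intro n x
    exact ⟨(abs_le.mp (hM n x)).1, (abs_le.mp (hM n x)).2⟩
  haveI : CompactSpace (Icc (-M) M : Set ℝ) := isCompact_iff_compactSpace.mp isCompact_Icc
  set F : ℕ → (∀ _ : I, (Icc (-M) M : Set ℝ)) := fun n i => ⟨f n (e i), hmem n (e i)⟩ with hF
  obtain ⟨a, φ, hφ, hconv⟩ := CompactSpace.tendsto_subseq F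
  have hcoord : ∀ i : I, Tendsto (fun k => f (φ k) (e i)) atTop (𝓝 (a i : ℝ)) := by
    intro i
    have h1 : Tendsto (fun k => (F ∘ φ) k i) atTop (𝓝 (a i)) := tendsto_pi_nhds.mp hconv i
    have h2 := (continuous_subtype_val.tendsto (a i)).comp h1
    exact h2
  -- Step 3: the subsequence is uniformly Cauchy.
  have hUC' : ∀ ε > (0 : ℝ), ∃ N : ℕ, ∀ m ≥ N, ∀ n ≥ N, ∀ x ∈ (univ : Set X),
      dist (f (φ m) x) (f (φ n) x) < ε := by
    intro ε hε
    obtain ⟨k₀, hk₀⟩ := exists_nat_one_div_lt (show (0:ℝ) < ε / 3 by linarith)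
    have hNB : ∀ B ∈ 𝓒 k₀, ∃ N : ℕ, ∀ m ≥ N, ∀ n ≥ N,
        dist (f (φ m) (pt B)) (f (φ n) (pt B)) < ε / 3 := by
      intro B hB
      have hc : CauchySeq (fun k => f (φ k) (pt B)) :=
        (hcoord ⟨k₀, ⟨B, hB⟩⟩).cauchySeq
      exact Metric.cauchySeq_iff.mp hc (ε / 3) (by linarith)
    choose! N hN using hNB
    refine ⟨(𝓒 k₀).sup N, ?_⟩
    intro m hm n hn x _
    obtain ⟨B, hB, hxB⟩ := hcov k₀ x
    have hpB : pt B ∈ B := hpt B ⟨x, hxB⟩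
    have h1 : |f (φ m) x - f (φ m) (pt B)| < 1 / (k₀ + 1) :=
      hosc k₀ (φ m) B hB x hxB (pt B) hpB
    have h2 : |f (φ n) (pt B) - f (φ n) x| < 1 / (k₀ + 1) :=
      hosc k₀ (φ n) B hB (pt B) hpB x hxB
    have h3 : dist (f (φ m) (pt B)) (f (φ n) (pt B)) < ε / 3 :=
      hN B hB m (le_trans (Finset.le_sup hB) hm) n (le_trans (Finset.le_sup hB) hn)
    rw [Real.dist_eq] at h3 ⊢
    have habs : |f (φ m) x - f (φ n) x| ≤ |f (φ m) x - f (φ m) (pt B)| +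
        |f (φ m) (pt B) - f (φ n) (pt B)| + |f (φ n) (pt B) - f (φ n) x| := by
      have := abs_sub_le (f (φ m) x) (f (φ m) (pt B)) (f (φ n) x)
      have := abs_sub_le (f (φ m) (pt B)) (f (φ n) (pt B)) (f (φ n) x)
      linarith [abs_sub_le (f (φ m) x) (f (φ m) (pt B)) (f (φ n) x),
        abs_sub_le (f (φ m) (pt B)) (f (φ n) (pt B)) (f (φ n) x)]
    linarith
  have hUC : UniformCauchySeqOn (fun k => f (φ k)) atTop (univ : Set X) :=
    Metric.uniformCauchySeqOn_iff.mpr hUC'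
  -- Step 4: pointwise limits give the limit function.
  have hex : ∀ x : X, ∃ L : ℝ, Tendsto (fun k => f (φ k) x) atTop (𝓝 L) := by
    intro x
    have hc : CauchySeq (fun k => f (φ k) x) := by
      rw [Metric.cauchySeq_iff]
      intro ε hε
      obtain ⟨Nn, hNn⟩ := hUC' ε hε
      exact ⟨Nn, fun m hm n hn => hNn m hm n hn x (mem_univ x)⟩
    exact cauchySeq_tendsto_of_complete hc
  choose g hg using hex
  have hTU : TendstoUniformly (fun k => f (φ k)) g atTop := by
    rw [← tendstoUniformlyOn_univ]
    exact hUC.tendstoUniformlyOn_of_tendsto (fun x _ => hg x)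
  exact ⟨φ, hφ, g, usc_of_tendstoUniformly (fun k => husc (φ k)) hTU, hTU⟩
end

section
/- Let X be a compact topological space and (Y,d) a boundedly compact metric space. If (f_n) is a sequence of cliquish functions from X to Y that is uniformly bounded and finitely equicontinuous, then there is a subsequence (f_{n_k}) converging uniformly on X to a cliquish function. -/
open Set Filter Topology Metric Bornology

/-- A function is cliquish if every nonempty open set contains a nonempty open set
on which the oscillation of `f` is less than `ε`. -/
def Cliquish {X Y : Type*} [TopologicalSpace X] [MetricSpace Y] (f : X → Y) : Prop :=
  ∀ ε > (0 : ℝ), ∀ U : Set X, IsOpen U → U.Nonempty →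
    ∃ O : Set X, IsOpen O ∧ O.Nonempty ∧ O ⊆ U ∧ ∀ p ∈ O, ∀ q ∈ O, dist (f p) (f q) < ε

theorem stmt13 {X Y : Type*} [TopologicalSpace X] [CompactSpace X]
    [MetricSpace Y] [ProperSpace Y]
    (f : ℕ → X → Y) (hcl : ∀ n, Cliquish (f n))
    (hub : ∃ K : Set Y, IsCompact K ∧ ∀ n, Set.range (f n) ⊆ K)
    (hfe : FinEquicont (Set.range f)) :
    ∃ φ : ℕ → ℕ, StrictMono φ ∧ ∃ g : X → Y, Cliquish g ∧
      TendstoUniformly (fun k => f (φ k)) g atTop := by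

  classical
  by_cases hX : Nonempty X
  swap
  · haveI : IsEmpty X := not_nonempty_iff.mp hX
    refine ⟨id, strictMono_id, fun x => isEmptyElim x, ?_, ?_⟩
    · intro ε hε U hU hUne
      obtain ⟨x, -⟩ := hUne
      exact isEmptyElim x
    · rw [Metric.tendstoUniformly_iff]
      intro ε hε
      filter_upwards with n x
      exact isEmptyElim x
  · obtain ⟨K, hK, hfK⟩ := hub
    have cov : ∀ m : ℕ, ∃ 𝓑 : Finset (Set X), (∀ x : X, ∃ B ∈ 𝓑, x ∈ B) ∧
        ∀ n : ℕ, ∀ B ∈ 𝓑, ∀ p ∈ B, ∀ q ∈ B, dist (f n p) (f n q) < 1 / (m + 1) := by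
      intro m
      have hpos : (0:ℝ) < 1 / (m+1) := by positivity
      choose 𝓑x hnhd hoscx using fun x : X => hfe x (1/(m+1)) hpos
      obtain ⟨t, ht⟩ := isCompact_univ.elim_nhds_subcover
        (fun x => ⋃₀ ((𝓑x x : Finset (Set X)) : Set (Set X))) (fun x _ => hnhd x)
      refine ⟨t.biUnion 𝓑x, ?_, ?_⟩
      · intro x
        have hx : x ∈ ⋃ y ∈ t, ⋃₀ ((𝓑x y : Finset (Set X)) : Set (Set X)) := ht.2 (mem_univ x)
        simp only [mem_iUnion] at hx
        obtain ⟨y, hy, hxB⟩ := hx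
        obtain ⟨B, hB, hxB⟩ := hxB
        exact ⟨B, Finset.mem_biUnion.mpr ⟨y, hy, hB⟩, hxB⟩
      · intro n B hB p hp q hq
        obtain ⟨y, hy, hB⟩ := Finset.mem_biUnion.mp hB
        exact hoscx y (f n) ⟨n, rfl⟩ B hB p hp q hq
    choose 𝓑 hcov hosc using cov
    let pt : Set X → X := fun B => if h : B.Nonempty then h.choose else hX.some
    have hpt : ∀ B : Set X, ∀ x ∈ B, pt B ∈ B := by
      intro B x hx
      have h : B.Nonempty := ⟨x, hx⟩
      simp only [pt, dif_pos h]
      exact h.choose_spec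
    let I := (m : ℕ) × {B : Set X // B ∈ 𝓑 m}
    let F : ℕ → I → Y := fun n i => f n (pt i.2.1)
    have hmem : ∀ n, F n ∈ Set.pi univ (fun _ : I => K) := fun n i _ => hfK n ⟨_, rfl⟩
    obtain ⟨L, -, φ, hφ, hconv⟩ :=
      (isCompact_univ_pi (fun _ : I => hK)).tendsto_subseq hmem
    have hcoord : ∀ i : I, Tendsto (fun k => F (φ k) i) atTop (𝓝 (L i)) :=
      fun i => (tendsto_pi_nhds.mp hconv) i
    have key : ∀ ε > (0:ℝ), ∃ N, ∀ k ≥ N, ∀ l ≥ N, ∀ x,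
        dist (f (φ k) x) (f (φ l) x) < ε := by
      intro ε hε
      obtain ⟨m, hm⟩ := exists_nat_one_div_lt (show (0:ℝ) < ε/3 by linarith)
      have hev : ∀ᶠ k in atTop, ∀ i : {B : Set X // B ∈ 𝓑 m},
          dist (F (φ k) ⟨m, i⟩) (L ⟨m, i⟩) < ε/6 := by
        rw [eventually_all]
        intro i
        obtain ⟨N, hN⟩ := Metric.tendsto_atTop.mp (hcoord ⟨m, i⟩) (ε/6) (by linarith)
        exact eventually_atTop.mpr ⟨N, fun k hk => hN k hk⟩
      obtain ⟨N, hN⟩ := eventually_atTop.mp hev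
      refine ⟨N, fun k hk l hl x => ?_⟩
      obtain ⟨B, hB, hxB⟩ := hcov m x
      have hptB : pt B ∈ B := hpt B x hxB
      have h1 : dist (f (φ k) x) (f (φ k) (pt B)) < 1/(m+1) :=
        hosc m (φ k) B hB x hxB (pt B) hptB
      have h2 : dist (f (φ l) (pt B)) (f (φ l) x) < 1/(m+1) :=
        hosc m (φ l) B hB (pt B) hptB x hxB
      have h3 : dist (f (φ k) (pt B)) (L ⟨m, ⟨B, hB⟩⟩) < ε/6 := hN k hk ⟨B, hB⟩
      have h4 : dist (f (φ l) (pt B)) (L ⟨m, ⟨B, hB⟩⟩) < ε/6 := hN l hl ⟨B, hB⟩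
      have t1 : dist (f (φ k) x) (f (φ l) x) ≤
          dist (f (φ k) x) (f (φ k) (pt B)) + dist (f (φ k) (pt B)) (f (φ l) (pt B))
          + dist (f (φ l) (pt B)) (f (φ l) x) := dist_triangle4 _ _ _ _
      have t2 : dist (f (φ k) (pt B)) (f (φ l) (pt B)) ≤
          dist (f (φ k) (pt B)) (L ⟨m, ⟨B, hB⟩⟩) + dist (f (φ l) (pt B)) (L ⟨m, ⟨B, hB⟩⟩) :=
        dist_triangle_right _ _ _
      linarith
    have hg : ∀ x : X, ∃ y : Y, Tendsto (fun k => f (φ k) x) atTop (𝓝 y) := by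
      intro x
      refine cauchySeq_tendsto_of_complete (Metric.cauchySeq_iff.mpr ?_)
      intro ε hε
      obtain ⟨N, hN⟩ := key ε hε
      exact ⟨N, fun k hk l hl => hN k hk l hl x⟩
    choose g hg using hg
    have hunif : TendstoUniformly (fun k => f (φ k)) g atTop := by
      rw [Metric.tendstoUniformly_iff]
      intro ε hε
      obtain ⟨N, hN⟩ := key (ε/2) (by linarith)
      refine eventually_atTop.mpr ⟨N, fun k hk x => ?_⟩
      have hle : dist (g x) (f (φ k) x) ≤ ε/2 := by
        refine le_of_tendsto (Tendsto.dist (hg x) tendsto_const_nhds) ?_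
        filter_upwards [eventually_ge_atTop N] with l hl
        exact le_of_lt (hN l hl k hk x)
      linarith
    have hgcl : Cliquish g := by
      intro ε hε U hU hUne
      obtain ⟨k, hk⟩ := (Metric.tendstoUniformly_iff.mp hunif (ε/3) (by linarith)).exists
      obtain ⟨O, hO, hOne, hOU, hoscO⟩ := hcl (φ k) (ε/3) (by linarith) U hU hUne
      refine ⟨O, hO, hOne, hOU, fun p hp q hq => ?_⟩
      have h1 := hk p
      have h2 := hk q
      have h3 := hoscO p hp q hq
      have t1 : dist (g p) (g q) ≤
          dist (g p) (f (φ k) p) + dist (f (φ k) p) (f (φ k) q) + dist (f (φ k) q) (g q) :=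
        dist_triangle4 _ _ _ _
      rw [dist_comm (f (φ k) q) (g q)] at t1
      linarith
    exact ⟨φ, hφ, g, hgcl, hunif⟩
end

section
/- Let X be a topological space and (Y,d) a metric space. If a net of quasicontinuous functions f_σ: X → Y converges uniformly on X to f: X → Y, then f is quasicontinuous. -/
open Set Filter Topology Metric Bornology

theorem stmt14 {X Y ι : Type*} [TopologicalSpace X] [MetricSpace Y]
    (l : Filter ι) [l.NeBot] (F : ι → X → Y) (f : X → Y)
    (hq : ∀ σ : ι, QuasiCont (F σ))
    (h : TendstoUniformly F f l) :
    QuasiCont f := by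
  intro x V hV hxV U hU hxU
  obtain ⟨ε, hε, hball⟩ := Metric.isOpen_iff.1 hV (f x) hxV
  have h3 : (0:ℝ) < ε/3 := by linarith
  obtain ⟨σ, hσ⟩ := (Metric.tendstoUniformly_iff.1 h (ε/3) h3).exists
  obtain ⟨W, hWo, hWne, hWU, hWim⟩ :=
    hq σ x (Metric.ball (F σ x) (ε/3)) Metric.isOpen_ball (Metric.mem_ball_self h3) U hU hxU
  refine ⟨W, hWo, hWne, hWU, ?_⟩
  rintro _ ⟨w, hw, rfl⟩
  apply hball
  have h1 : dist (f w) (F σ w) < ε/3 := hσ w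
  have h2 : dist (F σ w) (F σ x) < ε/3 := hWim ⟨w, hw, rfl⟩
  have h4 : dist (f x) (F σ x) < ε/3 := hσ x
  have := dist_triangle4 (f w) (F σ w) (F σ x) (f x)
  rw [Metric.mem_ball]
  rw [dist_comm (F σ x) (f x)] at this
  linarith
end

section
/- Every locally compact, separable metrizable space admits a compatible metric d such that every closed d-bounded subset is compact (i.e. it is boundedly compact under d). -/
open Set Filter Topology Metric Bornology

theorem stmt19 {X : Type*} [t : TopologicalSpace X] [LocallyCompactSpace X]
    [TopologicalSpace.MetrizableSpace X] [TopologicalSpace.SeparableSpace X] :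
    ∃ m : MetricSpace X, m.toUniformSpace.toTopologicalSpace = t ∧
      ∀ s : Set X, IsClosed s → @Bornology.IsBounded X m.toBornology s → IsCompact s := by
  letI m₀ : MetricSpace X := TopologicalSpace.metrizableSpaceMetric X
  haveI : SecondCountableTopology X := UniformSpace.secondCountable_of_separable X
  haveI : SigmaCompactSpace X := inferInstance
  set K : CompactExhaustion X := default with hK
  -- Urysohn functions
  have hf : ∀ n : ℕ, ∃ f : C(X, ℝ), EqOn f 0 (K n) ∧ EqOn f 1 (interior (K (n+1)))ᶜ ∧
      ∀ x, f x ∈ Icc (0 : ℝ) 1 := by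
    intro n
    exact exists_continuous_zero_one_of_isClosed (K.isCompact n).isClosed
      isOpen_interior.isClosed_compl
      (disjoint_compl_right.mono_left (K.subset_interior_succ n))
  choose f hf0 hf1 hf01 using hf
  -- vanishing of late terms
  have hvanish : ∀ m : ℕ, ∀ x ∈ K m, ∀ n, m ≤ n → f n x = 0 := by
    intro m x hx n hn
    exact hf0 n (K.subset hn hx)
  set F : X → ℝ := fun x => ∑' n, f n x with hF
  have hFsum : ∀ (m : ℕ) (x : X), x ∈ K m → F x = ∑ n ∈ Finset.range m, f n x := by
    intro m x hx
    refine tsum_eq_sum ?_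
    intro n hn
    exact hvanish m x hx n (le_of_not_gt fun h => hn (Finset.mem_range.2 h))
  have hFnonneg : ∀ x, 0 ≤ F x := by
    intro x
    obtain ⟨m, hm⟩ := K.exists_mem x
    rw [hFsum m x hm]
    exact Finset.sum_nonneg fun n _ => (hf01 n x).1
  have hFcont : Continuous F := by
    rw [continuous_iff_continuousAt]
    intro x
    obtain ⟨m, hm⟩ := K.exists_mem x
    have hx' : x ∈ interior (K (m+1)) := K.subset_interior_succ m hm
    have heq : F =ᶠ[𝓝 x] fun y => ∑ n ∈ Finset.range (m+1), f n y := by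
      filter_upwards [isOpen_interior.mem_nhds hx'] with y hy
      exact hFsum (m+1) y (interior_subset hy)
    refine ContinuousAt.congr ?_ heq.symm
    exact (continuous_finset_sum _ fun n _ => (f n).continuous).continuousAt
  have hsummable : ∀ x, Summable fun n => f n x := by
    intro x
    obtain ⟨m, hm⟩ := K.exists_mem x
    refine summable_of_ne_finset_zero (s := Finset.range m) ?_
    intro n hn
    exact hvanish m x hm n (le_of_not_gt fun h => hn (Finset.mem_range.2 h))
  have hFlarge : ∀ (N : ℕ) (x : X), x ∉ K N → (N : ℝ) ≤ F x := by
    intro N x hx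
    have h1 : ∀ n ∈ Finset.range N, f n x = 1 := by
      intro n hn
      refine hf1 n ?_
      intro hmem
      exact hx (K.subset (Finset.mem_range.1 hn) (interior_subset hmem))
    have h2 : ∑ n ∈ Finset.range N, f n x = N := by
      rw [Finset.sum_congr rfl h1]
      simp
    calc (N : ℝ) = ∑ n ∈ Finset.range N, f n x := h2.symm
      _ ≤ F x := Summable.sum_le_tsum _ (fun n _ => (hf01 n x).1) (hsummable x)
  -- the graph embedding
  set φ : X → X × ℝ := fun x => (x, F x) with hφdef
  have hφ : Topology.IsEmbedding φ := isEmbedding_graph hFcont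
  refine ⟨hφ.comapMetricSpace φ, rfl, ?_⟩
  intro s hs hb
  rcases s.eq_empty_or_nonempty with rfl | ⟨x₀, hx₀⟩
  · exact isCompact_empty
  have hb' := (@Metric.isBounded_iff X (hφ.comapMetricSpace φ).toPseudoMetricSpace s).mp hb
  obtain ⟨C, hC⟩ := hb'
  have hFbound : ∀ x ∈ s, F x ≤ F x₀ + C := by
    intro x hx
    have h1 : dist (φ x) (φ x₀) ≤ C := hC hx hx₀
    rw [Prod.dist_eq] at h1
    have h2 : dist (F x) (F x₀) ≤ C := le_trans (le_max_right _ _) h1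
    have := le_trans (le_abs_self _) (by rw [← Real.dist_eq]; exact h2 : |F x - F x₀| ≤ C)
    linarith
  set c : ℝ := F x₀ + C with hc
  set N : ℕ := ⌈c⌉₊ + 1 with hN
  have hsub : s ⊆ K N := by
    intro x hx
    by_contra hxK
    have h1 : (N : ℝ) ≤ F x := hFlarge N x hxK
    have h2 : F x ≤ c := hFbound x hx
    have h3 : c ≤ (⌈c⌉₊ : ℝ) := Nat.le_ceil c
    have h4 : ((⌈c⌉₊ : ℕ) : ℝ) < N := by exact_mod_cast Nat.lt_succ_self _
    linarith
  exact (K.isCompact N).of_isClosed_subset hs hsub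
end
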